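/- Let ε be a complex number satisfying either Re ε > 0 and ε⁻¹ ∉ ℤ, or Re ε = 0 and Im ε > 0, let f(m,n) = −n(1+εn)/(1+ε(m+n)) for m,n ∈ ℤ, and define ω(m,n) = (1/24)(m³ − m + (ε − ε⁻¹)m²)·δ_{m+n,0}, where δ_{m+n,0} = 1 if m+n = 0 and 0 otherwise. Then for all m,n,l ∈ ℤ: (i) ω(m,n) − ω(n,m) = (1/12)(m³ − m)·δ_{m+n,0}, and (ii) (m−n)·ω(m+n,l) = f(n,l)·ω(m,n+l) − f(m,l)·ω(n,m+l). -/

import Mathlib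

private lemma vir_key (ε a b : ℂ) (hε : ε ≠ 0) (ha : 1 - ε * a ≠ 0)
    (hb : 1 - ε * b ≠ 0) :
    (a - b) * ((1 / 24 : ℂ) * ((a + b) ^ 3 - (a + b) + (ε - ε⁻¹) * (a + b) ^ 2))
      = ((a + b) * (1 - ε * (a + b)) / (1 - ε * a))
          * ((1 / 24 : ℂ) * (a ^ 3 - a + (ε - ε⁻¹) * a ^ 2))
        - ((a + b) * (1 - ε * (a + b)) / (1 - ε * b))
          * ((1 / 24 : ℂ) * (b ^ 3 - b + (ε - ε⁻¹) * b ^ 2)) := by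
  have ha' : 1 - a * ε ≠ 0 := by rwa [mul_comm] at ha
  have hb' : 1 - b * ε ≠ 0 := by rwa [mul_comm] at hb
  field_simp
  ring

/-- With ε as in the classification, f(m,n) = −n(1+εn)/(1+ε(m+n)) and
ω(m,n) = (1/24)(m³ − m + (ε − ε⁻¹)m²)δ_{m+n,0}, the cocycle ω satisfies
ω(m,n) − ω(n,m) = (1/12)(m³−m)δ_{m+n,0} and
(m−n)ω(m+n,l) = f(n,l)ω(m,n+l) − f(m,l)ω(n,m+l). -/
theorem virasoro_central_extension_left_symmetric (ε : ℂ)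
    (hε : (0 < ε.re ∧ ∀ k : ℤ, ε⁻¹ ≠ (k : ℂ)) ∨ (ε.re = 0 ∧ 0 < ε.im))
    (f ω : ℤ → ℤ → ℂ)
    (hf : ∀ m n : ℤ,
      f m n = -(n : ℂ) * (1 + ε * (n : ℂ)) / (1 + ε * ((m : ℂ) + (n : ℂ))))
    (hω : ∀ m n : ℤ,
      ω m n = (1 / 24 : ℂ) * ((m : ℂ) ^ 3 - (m : ℂ) + (ε - ε⁻¹) * (m : ℂ) ^ 2) *
        (if m + n = 0 then 1 else 0)) :
    ∀ m n l : ℤ,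
      ω m n - ω n m
        = (1 / 12 : ℂ) * ((m : ℂ) ^ 3 - (m : ℂ)) * (if m + n = 0 then 1 else 0) ∧
      ((m : ℂ) - (n : ℂ)) * ω (m + n) l
        = f n l * ω m (n + l) - f m l * ω n (m + l) := by
  have hε0 : ε ≠ 0 := by
    intro h
    rcases hε with ⟨h1, _⟩ | ⟨_, h2⟩
    · rw [h] at h1; simp at h1
    · rw [h] at h2; simp at h2
  have hden : ∀ k : ℤ, 1 - ε * (k : ℂ) ≠ 0 := by
    intro k hk
    rcases hε with ⟨_, h2⟩ | ⟨h1, _⟩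
    · apply h2 k
      have hmul : ε * (k : ℂ) = 1 := by linear_combination -hk
      exact inv_eq_of_mul_eq_one_right hmul
    · have := congrArg Complex.re hk
      simp [Complex.sub_re, Complex.mul_re, h1] at this
  intro m n l
  constructor
  · rw [hω, hω]
    by_cases h : m + n = 0
    · have hn : (n : ℂ) = -(m : ℂ) := by
        have : n = -m := by omega
        rw [this]; push_cast; ring
      simp only [h, show n + m = 0 by omega, if_pos, hn]
      ring
    · simp [h, show ¬ n + m = 0 by omega]
  · by_cases h : m + n + l = 0
    · have hl : (l : ℂ) = -((m : ℂ) + (n : ℂ)) := by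
        have : l = -(m + n) := by omega
        rw [this]; push_cast; ring
      have ha : 1 - ε * (m : ℂ) ≠ 0 := hden m
      have hb : 1 - ε * (n : ℂ) ≠ 0 := hden n
      have hfn : f n l = ((m : ℂ) + n) * (1 - ε * ((m : ℂ) + n)) / (1 - ε * m) := by
        rw [hf, hl]
        rw [show (1 + ε * ((n : ℂ) + -((m : ℂ) + n))) = 1 - ε * (m : ℂ) from by ring]
        rw [div_eq_div_iff (by simpa using ha) (by simpa using ha)]
        ring
      have hfm : f m l = ((m : ℂ) + n) * (1 - ε * ((m : ℂ) + n)) / (1 - ε * n) := by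
        rw [hf, hl]
        rw [show (1 + ε * ((m : ℂ) + -((m : ℂ) + n))) = 1 - ε * (n : ℂ) from by ring]
        rw [div_eq_div_iff (by simpa using hb) (by simpa using hb)]
        ring
      rw [hω, hω, hω, hfn, hfm]
      simp only [show m + n + l = 0 from h, show m + (n + l) = 0 by omega,
        show n + (m + l) = 0 by omega, if_pos, mul_one]
      push_cast
      linear_combination vir_key ε (m : ℂ) (n : ℂ) hε0 ha hb
    · rw [hω, hω, hω]
      simp [show ¬ m + n + l = 0 from h, show ¬ m + (n + l) = 0 by omega,
        show ¬ n + (m + l) = 0 by omega]
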